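/- Let B be a unital C*-algebra, n ≥ 2 a natural number, and y₁,…,yₙ ∈ B with ‖Σᵢ yᵢ*yᵢ‖ ≤ 1. Set d = (1 − Σᵢ yᵢ*yᵢ)^{1/2} and define ỹ₁ = [[y₁, 0], [d, 0]], ỹ₂ = [[y₂, 0], [0, 1]], and ỹᵢ = [[yᵢ, 0], [0, 0]] (3 ≤ i ≤ n) in M₂(B). Let J be a two-sided ideal of B with d ∈ J. Then for every pair (m, b) in the submonoid of the product monoid M₂(B) × B generated by the pairs (ỹᵢ, yᵢ) and (ỹᵢ*, yᵢ*) (1 ≤ i ≤ n), the (1,1)-entry of m is congruent to b modulo J, i.e. m₁₁ − b ∈ J. -/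

import Mathlib

open scoped Matrix

/-- With `ỹᵢ` the 2×2 dilations of the `yᵢ` (where `‖∑ yᵢ* yᵢ‖ ≤ 1` and
`d = (1 - ∑ yᵢ* yᵢ)^{1/2}`), and `J` a two-sided ideal of `B` containing `d`, every pair
`(m, b)` in the submonoid of `M₂(B) × B` generated by the pairs `(ỹᵢ, yᵢ)` and
`(ỹᵢ*, yᵢ*)` satisfies `m₁₁ - b ∈ J`. -/
theorem entry_sub_mem_ideal_of_mem_closure_dilated_pairs
    {B : Type*} [CStarAlgebra B] [PartialOrder B] [StarOrderedRing B]
    (n : ℕ) (hn : 2 ≤ n) (y : Fin n → B)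
    (hy : ‖∑ i, star (y i) * y i‖ ≤ 1)
    (d : B) (hd : d = CFC.sqrt (1 - ∑ i, star (y i) * y i))
    (Y : Fin n → Matrix (Fin 2) (Fin 2) B)
    (hY : ∀ i : Fin n, Y i =
      if (i : ℕ) = 0 then !![y i, 0; d, 0]
      else if (i : ℕ) = 1 then !![y i, 0; 0, 1]
      else !![y i, 0; 0, 0])
    (J : TwoSidedIdeal B) (hdJ : d ∈ J) :
    ∀ q ∈ Submonoid.closure {q : Matrix (Fin 2) (Fin 2) B × B |
        ∃ i : Fin n, q = (Y i, y i) ∨ q = (star (Y i), star (y i))},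
      q.1 0 0 - q.2 ∈ J := by
  have hdsa : star d = d := by
    rw [hd]
    exact IsSelfAdjoint.of_nonneg (CFC.sqrt_nonneg _)
  have h00 : ∀ i, Y i 0 0 = y i := by
    intro i; rw [hY]; split_ifs <;> simp
  have h01 : ∀ i, Y i 0 1 = 0 := by
    intro i; rw [hY]; split_ifs <;> simp
  have h10 : ∀ i, Y i 1 0 ∈ J := by
    intro i; rw [hY]; split_ifs <;> simp [hdJ, J.zero_mem]
  suffices H : ∀ q ∈ Submonoid.closure {q : Matrix (Fin 2) (Fin 2) B × B |
        ∃ i : Fin n, q = (Y i, y i) ∨ q = (star (Y i), star (y i))},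
      q.1 0 0 - q.2 ∈ J ∧ q.1 0 1 ∈ J ∧ q.1 1 0 ∈ J by
    exact fun q hq => (H q hq).1
  intro q hq
  induction hq using Submonoid.closure_induction with
  | mem x hx =>
    obtain ⟨i, hx | hx⟩ := hx <;> subst hx
    · exact ⟨by simp [h00], by simp [h01, J.zero_mem], h10 i⟩
    · refine ⟨by simp [Matrix.star_apply, h00], ?_, ?_⟩
      · simp only [Prod.fst, Matrix.star_apply]
        rcases (by rw [hY]; split_ifs <;> simp [hdsa] : star (Y i 1 0) = d ∨ star (Y i 1 0) = 0) with h | h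
        · rw [h]; exact hdJ
        · rw [h]; exact J.zero_mem
      · simp [Matrix.star_apply, h01, J.zero_mem]
  | one => exact ⟨by simp [J.zero_mem, Matrix.one_apply], by simp [Matrix.one_apply, J.zero_mem],
      by simp [Matrix.one_apply, J.zero_mem]⟩
  | mul a b _ _ ha hb =>
    obtain ⟨ha1, ha2, ha3⟩ := ha
    obtain ⟨hb1, hb2, hb3⟩ := hb
    have e1 : (a * b).1 0 0 = a.1 0 0 * b.1 0 0 + a.1 0 1 * b.1 1 0 := by
      simp [Matrix.mul_apply, Fin.sum_univ_two]
    have e2 : (a * b).1 0 1 = a.1 0 0 * b.1 0 1 + a.1 0 1 * b.1 1 1 := by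
      simp [Matrix.mul_apply, Fin.sum_univ_two]
    have e3 : (a * b).1 1 0 = a.1 1 0 * b.1 0 0 + a.1 1 1 * b.1 1 0 := by
      simp [Matrix.mul_apply, Fin.sum_univ_two]
    refine ⟨?_, ?_, ?_⟩
    · have : (a * b).1 0 0 - (a * b).2
          = a.1 0 0 * (b.1 0 0 - b.2) + (a.1 0 0 - a.2) * b.2 + a.1 0 1 * b.1 1 0 := by
        rw [e1]; show _ = _ + _ + _; noncomm_ring
      rw [this]
      exact J.add_mem (J.add_mem (J.mul_mem_left _ _ hb1) (J.mul_mem_right _ _ ha1))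
        (J.mul_mem_left _ _ hb3)
    · rw [e2]
      exact J.add_mem (J.mul_mem_left _ _ hb2) (J.mul_mem_right _ _ ha2)
    · rw [e3]
      exact J.add_mem (J.mul_mem_right _ _ ha3) (J.mul_mem_left _ _ hb3)
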